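/- Consider the 2×2 switch finite-horizon dynamic program (without idling). For every t ∈ {1,…,T} and every deviation vector d ∈ ℤ⁴, every configuration minimizing the instantaneous cost also achieves the dynamic-programming optimum: if v ∈ {v₁, v₂} satisfies Φ(d+v−x^t) ≤ Φ(d+v'−x^t) for the other configuration v', then V^t(d) = V^{t+1}(d+v−x^t) + Φ(d+v−x^t). In other words, the myopic (greedy) policy is optimal for the 2×2 switch. -/

import Mathlib

open Finset

/-- The first complete configuration `v₁ = (1,0,0,1)` of a 2×2 switch. -/
def v1 : Fin 4 → ℤ := ![1, 0, 0, 1]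

/-- The second complete configuration `v₂ = (0,1,1,0)` of a 2×2 switch. -/
def v2 : Fin 4 → ℤ := ![0, 1, 1, 0]

/-- Discrete convexity of a function `φ : ℤ → ℝ`:
`φ(k) − φ(k−1) ≤ φ(k+1) − φ(k)` for every `k`. -/
def IntConvex (φ : ℤ → ℝ) : Prop :=
  ∀ k : ℤ, φ k - φ (k - 1) ≤ φ (k + 1) - φ k

/-- The direction `e = v₁ − v₂ = (1,−1,−1,1)`. -/
def ee : Fin 4 → ℤ := ![1, -1, -1, 1]

lemma ee_eq : ee = v1 - v2 := by
  funext i; fin_cases i <;> rfl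

lemma conv_step {φ : ℤ → ℝ} (h : IntConvex φ) (k m : ℤ) (hkm : k ≤ m) :
    φ (k+1) - φ k ≤ φ (m+1) - φ m := by
  refine Int.le_induction (motive := fun n _ => φ (k+1) - φ k ≤ φ (n+1) - φ n) ?_ ?_ m hkm
  · exact le_refl _
  · intro n hn ih
    refine ih.trans ?_
    have := h (n+1)
    simpa using this

lemma gmono_v1 (φ : Fin 4 → ℤ → ℝ) (hconv : ∀ i, IntConvex (φ i))
    (x : Fin 4 → ℤ) (hx : ∀ i, x i = 0 ∨ x i = 1) (a : Fin 4 → ℤ) :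
    (∑ i, φ i ((a + ee) i)) - (∑ i, φ i (a i))
      ≤ (∑ i, φ i ((a + v1 - x + ee) i)) - ∑ i, φ i ((a + v1 - x) i) := by
  have h0 : φ 0 (a 0 + 1) - φ 0 (a 0) ≤ φ 0 (a 0 + 1 - x 0 + 1) - φ 0 (a 0 + 1 - x 0) :=
    conv_step (hconv 0) _ _ (by rcases hx 0 with h|h <;> simp [h])
  have h3 : φ 3 (a 3 + 1) - φ 3 (a 3) ≤ φ 3 (a 3 + 1 - x 3 + 1) - φ 3 (a 3 + 1 - x 3) :=
    conv_step (hconv 3) _ _ (by rcases hx 3 with h|h <;> simp [h])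
  have h1 : φ 1 (a 1 - x 1 - 1 + 1) - φ 1 (a 1 - x 1 - 1) ≤ φ 1 (a 1 - 1 + 1) - φ 1 (a 1 - 1) :=
    conv_step (hconv 1) _ _ (by rcases hx 1 with h|h <;> simp [h])
  have h2 : φ 2 (a 2 - x 2 - 1 + 1) - φ 2 (a 2 - x 2 - 1) ≤ φ 2 (a 2 - 1 + 1) - φ 2 (a 2 - 1) :=
    conv_step (hconv 2) _ _ (by rcases hx 2 with h|h <;> simp [h])
  simp only [Fin.sum_univ_four, Pi.add_apply, Pi.sub_apply, v1, ee,
    Matrix.cons_val_zero, Matrix.cons_val_one, Matrix.head_cons,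
    Matrix.cons_val_two, Matrix.tail_cons, Matrix.cons_val_three]
  ring_nf
  ring_nf at h0 h1 h2 h3
  linarith

lemma gmono_v2 (φ : Fin 4 → ℤ → ℝ) (hconv : ∀ i, IntConvex (φ i))
    (x : Fin 4 → ℤ) (hx : ∀ i, x i = 0 ∨ x i = 1) (a : Fin 4 → ℤ) :
    (∑ i, φ i ((a + v2 - x + ee) i)) - (∑ i, φ i ((a + v2 - x) i))
      ≤ (∑ i, φ i ((a + ee) i)) - ∑ i, φ i (a i) := by
  have h0 : φ 0 (a 0 - x 0 + 1) - φ 0 (a 0 - x 0) ≤ φ 0 (a 0 + 1) - φ 0 (a 0) :=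
    conv_step (hconv 0) _ _ (by rcases hx 0 with h|h <;> simp [h])
  have h3 : φ 3 (a 3 - x 3 + 1) - φ 3 (a 3 - x 3) ≤ φ 3 (a 3 + 1) - φ 3 (a 3) :=
    conv_step (hconv 3) _ _ (by rcases hx 3 with h|h <;> simp [h])
  have h1 : φ 1 (a 1 - 1 + 1) - φ 1 (a 1 - 1) ≤ φ 1 (a 1 - x 1 + 1) - φ 1 (a 1 - x 1) :=
    conv_step (hconv 1) _ _ (by rcases hx 1 with h|h <;> simp [h])
  have h2 : φ 2 (a 2 - 1 + 1) - φ 2 (a 2 - 1) ≤ φ 2 (a 2 - x 2 + 1) - φ 2 (a 2 - x 2) :=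
    conv_step (hconv 2) _ _ (by rcases hx 2 with h|h <;> simp [h])
  simp only [Fin.sum_univ_four, Pi.add_apply, Pi.sub_apply, v2, ee,
    Matrix.cons_val_zero, Matrix.cons_val_one, Matrix.head_cons,
    Matrix.cons_val_two, Matrix.tail_cons, Matrix.cons_val_three]
  ring_nf
  ring_nf at h0 h1 h2 h3
  linarith

theorem stmt0
    (T : ℕ)
    (φ : Fin 4 → ℤ → ℝ)
    (hconv : ∀ i, IntConvex (φ i))
    (hnonneg : ∀ i k, 0 ≤ φ i k)
    (hzero : ∀ i, φ i 0 = 0)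
    (hmono_neg : ∀ i, ∀ k : ℤ, k ≤ 0 → ∀ k' ≤ k, φ i k ≤ φ i k')
    (hmono_pos : ∀ i, ∀ k : ℤ, 0 ≤ k → ∀ k', k ≤ k' → φ i k ≤ φ i k')
    (x : ℕ → Fin 4 → ℤ)
    (hx : ∀ t, 1 ≤ t → t ≤ T → ∀ i, x t i = 0 ∨ x t i = 1)
    (Φ : (Fin 4 → ℤ) → ℝ)
    (hΦ : ∀ d, Φ d = ∑ i, φ i (d i))
    (V : ℕ → (Fin 4 → ℤ) → ℝ)
    (hVT : ∀ d, V (T + 1) d = 0)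
    (hV : ∀ t, 1 ≤ t → t ≤ T → ∀ d,
      V t d = min (V (t + 1) (d + v1 - x t) + Φ (d + v1 - x t))
                  (V (t + 1) (d + v2 - x t) + Φ (d + v2 - x t)))
    (t : ℕ) (ht1 : 1 ≤ t) (htT : t ≤ T)
    (d : Fin 4 → ℤ) (v v' : Fin 4 → ℤ)
    (hvv' : (v = v1 ∧ v' = v2) ∨ (v = v2 ∧ v' = v1))
    (hmyopic : Φ (d + v - x t) ≤ Φ (d + v' - x t)) :
    V t d = V (t + 1) (d + v - x t) + Φ (d + v - x t) := by
  -- monotonicity of g(a) = Φ(a+e) − Φ(a) along one-step moves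
  have hg1 : ∀ s, 1 ≤ s → s ≤ T → ∀ a : Fin 4 → ℤ,
      Φ (a + ee) - Φ a ≤ Φ ((a + v1 - x s) + ee) - Φ (a + v1 - x s) := by
    intro s hs1 hsT a
    simpa only [hΦ] using gmono_v1 φ hconv (x s) (hx s hs1 hsT) a
  have hg2 : ∀ s, 1 ≤ s → s ≤ T → ∀ a : Fin 4 → ℤ,
      Φ ((a + v2 - x s) + ee) - Φ (a + v2 - x s) ≤ Φ (a + ee) - Φ a := by
    intro s hs1 hsT a
    simpa only [hΦ] using gmono_v2 φ hconv (x s) (hx s hs1 hsT) a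
  -- key invariant by backward induction
  have key : ∀ k : ℕ, k ≤ T - t → ∀ a : Fin 4 → ℤ,
      (Φ a ≤ Φ (a + ee) →
        Φ a + V (T + 1 - k) a ≤ Φ (a + ee) + V (T + 1 - k) (a + ee)) ∧
      (Φ (a + ee) ≤ Φ a →
        Φ (a + ee) + V (T + 1 - k) (a + ee) ≤ Φ a + V (T + 1 - k) a) := by
    intro k
    induction k with
    | zero =>
        intro _ a
        simp only [Nat.sub_zero, hVT]
        constructor <;> intro h <;> linarith
    | succ k ih =>
        intro hk a
        have hs1 : 1 ≤ T - k := by omega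
        have hsT : T - k ≤ T := by omega
        have hE : T + 1 - (k + 1) = T - k := by omega
        have hE1 : T + 1 - k = (T - k) + 1 := by omega
        rw [hE]
        set s := T - k with hsdef
        have ih' := fun a => ih (by omega) a
        rw [hE1] at ih'
        have hVa := hV s hs1 hsT a
        have hVae := hV s hs1 hsT (a + ee)
        have e1 : (a + ee) + v1 - x s = (a + v1 - x s) + ee := by ring
        have e2 : (a + ee) + v2 - x s = a + v1 - x s := by rw [ee_eq]; ring
        have e3 : (a + v2 - x s) + ee = a + v1 - x s := by rw [ee_eq]; ring
        rw [e1, e2] at hVae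
        constructor
        · intro hga
          -- g(u1) ≥ 0 where u1 = a + v1 - x s
          have hgu : Φ (a + v1 - x s) ≤ Φ ((a + v1 - x s) + ee) := by
            have := hg1 s hs1 hsT a
            linarith
          have hM := (ih' (a + v1 - x s)).1 hgu
          have hmin : V s (a + ee)
              = V (s + 1) (a + v1 - x s) + Φ (a + v1 - x s) := by
            rw [hVae]
            apply min_eq_right
            linarith
          have hle : V s a ≤ V (s + 1) (a + v1 - x s) + Φ (a + v1 - x s) := by
            rw [hVa]; apply min_le_left
          rw [hmin]
          linarith
        · intro hga
          have hgu : Φ ((a + v2 - x s) + ee) ≤ Φ (a + v2 - x s) := by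
            have := hg2 s hs1 hsT a
            linarith
          have hM := (ih' (a + v2 - x s)).2 hgu
          rw [e3] at hM
          have hmin : V s a
              = V (s + 1) (a + v1 - x s) + Φ (a + v1 - x s) := by
            rw [hVa]
            apply min_eq_left
            linarith
          have hle : V s (a + ee) ≤ V (s + 1) (a + v1 - x s) + Φ (a + v1 - x s) := by
            rw [hVae]; apply min_le_right
          rw [hmin]
          linarith
  have hkey := key (T - t) (le_refl _)
  have hE : T + 1 - (T - t) = t + 1 := by omega
  rw [hE] at hkey
  have hVt := hV t ht1 htT d
  rcases hvv' with ⟨hv, hv'⟩ | ⟨hv, hv'⟩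
  · subst hv; subst hv'
    have e3 : (d + v2 - x t) + ee = d + v1 - x t := by rw [ee_eq]; ring
    have h := (hkey (d + v2 - x t)).2 (by rw [e3]; exact hmyopic)
    rw [e3] at h
    rw [hVt]
    apply min_eq_left
    linarith
  · subst hv; subst hv'
    have e3 : (d + v2 - x t) + ee = d + v1 - x t := by rw [ee_eq]; ring
    have h := (hkey (d + v2 - x t)).1 (by rw [e3]; exact hmyopic)
    rw [e3] at h
    rw [hVt]
    apply min_eq_right
    linarith
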